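/- Let D be a finite set, let j ≥ 1 be an integer, and let h be a complex-valued function on D^j. Let X̄ denote the set of j-tuples (x_1,…,x_j) ∈ D^j with pairwise distinct entries, and for a permutation τ of {1,…,j} let X_τ = {(x_1,…,x_j) ∈ D^j : x_i = x_k whenever i and k lie in the same cycle of τ}. Then Σ_{x ∈ X̄} h(x) = Σ_{τ ∈ S_j} (−1)^{j − l(τ)} · Σ_{x ∈ X_τ} h(x), where l(τ) denotes the number of cycles of τ (fixed points included). -/

import Mathlib

noncomputable section

/-- `l(τ)`: the number of cycles of a permutation (fixed points included). -/
def numCycles {j : ℕ} (τ : Equiv.Perm (Fin j)) : ℕ :=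
  Multiset.card τ.cycleType + (Finset.univ.filter fun x => τ x = x).card

lemma pow_eq_sign {j : ℕ} (τ : Equiv.Perm (Fin j)) :
    ((-1 : ℂ)) ^ (j - numCycles τ) = ((Equiv.Perm.sign τ : ℤ) : ℂ) := by
  classical
  have hsum : τ.cycleType.sum = τ.support.card := Equiv.Perm.sum_cycleType τ
  have hcle : Multiset.card τ.cycleType ≤ τ.support.card := by
    rw [← hsum]
    have := Multiset.card_nsmul_le_sum (s := τ.cycleType) (a := 1)
      (fun x hx => le_of_lt (one_lt_two.trans_le (Equiv.Perm.two_le_of_mem_cycleType hx)))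
    simpa using this
  have hfix : (Finset.univ.filter fun x => τ x = x).card = j - τ.support.card := by
    have : (Finset.univ.filter fun x => τ x = x) = τ.supportᶜ := by
      ext x
      simp [Equiv.Perm.mem_support]
    rw [this, Finset.card_compl, Fintype.card_fin]
  have hsle : τ.support.card ≤ j := by
    simpa using Finset.card_le_card (Finset.subset_univ τ.support)
  have h1 : j - numCycles τ = τ.support.card - Multiset.card τ.cycleType := by
    unfold numCycles
    omega
  have h2 : (Equiv.Perm.sign τ : ℤ) = (-1 : ℤ) ^ (τ.cycleType.sum + Multiset.card τ.cycleType) := by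
    rw [Equiv.Perm.sign_of_cycleType]
    push_cast
    rfl
  rw [h1, h2, hsum]
  push_cast
  have h3 : τ.support.card + Multiset.card τ.cycleType
      = (τ.support.card - Multiset.card τ.cycleType) + 2 * Multiset.card τ.cycleType := by
    omega
  rw [h3, pow_add, pow_mul]
  norm_num

/-- The Li–Wan coordinate-sieve formula: summing `h` over tuples from `D` with pairwise
distinct coordinates equals the signed sum over permutations `τ` of the sums of `h` over
tuples that are constant on each cycle of `τ`. -/
theorem stmt18 {α : Type*} (D : Finset α) (j : ℕ) (hj : 1 ≤ j)
    (h : (Fin j → α) → ℂ) :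
    ∑ᶠ x ∈ {x : Fin j → α | (∀ i, x i ∈ D) ∧ Function.Injective x}, h x =
      ∑ τ : Equiv.Perm (Fin j), (-1 : ℂ) ^ (j - numCycles τ) *
        ∑ᶠ x ∈ {x : Fin j → α | (∀ i, x i ∈ D) ∧
            ∀ i k : Fin j, τ.SameCycle i k → x i = x k}, h x := by
  classical
  set F : Finset (Fin j → α) := Fintype.piFinset (fun _ => D) with hF
  have hmemF : ∀ x : Fin j → α, x ∈ F ↔ ∀ i, x i ∈ D := fun x => Fintype.mem_piFinset
  -- the constancy condition is equivalent to invariance under τ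
  have hcond : ∀ (τ : Equiv.Perm (Fin j)) (x : Fin j → α),
      (∀ i k : Fin j, τ.SameCycle i k → x i = x k) ↔ ∀ i, x (τ i) = x i := by
    intro τ x
    constructor
    · intro H i
      exact (H i (τ i) ⟨1, by simp⟩).symm
    · intro H i k hik
      obtain ⟨n, hn⟩ := hik
      have key : ∀ n : ℤ, ∀ i, x ((τ ^ n) i) = x i := by
        have h1 : ∀ i, x (τ⁻¹ i) = x i := by
          intro i
          conv_rhs => rw [← Equiv.apply_symm_apply τ i]
          exact (H (τ⁻¹ i)).symm
        intro n
        induction n using Int.induction_on with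
        | zero => simp
        | succ n ih =>
          intro i
          have : ((τ : Equiv.Perm (Fin j)) ^ ((n : ℤ) + 1)) i = (τ ^ (n : ℤ)) (τ i) := by
            rw [zpow_add, zpow_one]
            rfl
          rw [this, ih, H]
        | pred n ih =>
          intro i
          have : ((τ : Equiv.Perm (Fin j)) ^ (-(n : ℤ) - 1)) i = (τ ^ (-(n : ℤ))) (τ⁻¹ i) := by
            rw [sub_eq_add_neg, zpow_add, zpow_neg_one]
            rfl
          rw [this, ih, h1]
      rw [← hn, key]
  -- the key character-sum computation
  have hkey : ∀ x : Fin j → α,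
      (∑ τ : Equiv.Perm (Fin j),
        if (∀ i, x (τ i) = x i) then ((Equiv.Perm.sign τ : ℤ) : ℂ) else 0)
        = if Function.Injective x then 1 else 0 := by
    intro x
    by_cases hx : Function.Injective x
    · rw [if_pos hx, Finset.sum_eq_single (1 : Equiv.Perm (Fin j))]
      · simp
      · intro τ _ hτ
        rw [if_neg]
        intro H
        exact hτ (Equiv.ext fun i => hx (H i))
      · simp
    · rw [if_neg hx, ← Finset.sum_filter]
      obtain ⟨a, b, hab, hne⟩ := Function.not_injective_iff.mp hx
      have hswap : ∀ m, x (Equiv.swap a b m) = x m := by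
        intro m
        rcases eq_or_ne m a with rfl | hma
        · rw [Equiv.swap_apply_left, hab]
        rcases eq_or_ne m b with rfl | hmb
        · rw [Equiv.swap_apply_right, hab]
        · rw [Equiv.swap_apply_of_ne_of_ne hma hmb]
      refine Finset.sum_involution (fun τ _ => Equiv.swap a b * τ) ?_ ?_ ?_ ?_
      · intro τ hτ
        have : Equiv.Perm.sign (Equiv.swap a b * τ) = - Equiv.Perm.sign τ := by
          rw [map_mul, Equiv.Perm.sign_swap hne, neg_one_mul]
        rw [this]
        push_cast
        ring
      · intro τ _ _
        intro Heq
        have Heq' : Equiv.swap a b * τ = τ := Heq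
        have : Equiv.swap a b = 1 := mul_right_cancel (Heq'.trans (one_mul τ).symm)
        have := congrArg (fun σ : Equiv.Perm (Fin j) => σ a) this
        simp [Equiv.swap_apply_left] at this
        exact hne this.symm
      · intro τ hτ
        simp only [Finset.mem_filter, Finset.mem_univ, true_and] at hτ ⊢
        intro i
        rw [Equiv.Perm.mul_apply, hswap, hτ i]
      · intro τ _
        show Equiv.swap a b * (Equiv.swap a b * τ) = τ
        rw [← mul_assoc, Equiv.swap_mul_self, one_mul]
  -- rewrite LHS as a Finset sum
  have hL : {x : Fin j → α | (∀ i, x i ∈ D) ∧ Function.Injective x}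
      = ↑(F.filter fun x => Function.Injective x) := by
    ext x
    simp [hmemF x]
  rw [hL, finsum_mem_coe_finset]
  -- rewrite RHS inner sums as Finset sums
  have hR : ∀ τ : Equiv.Perm (Fin j),
      {x : Fin j → α | (∀ i, x i ∈ D) ∧ ∀ i k : Fin j, τ.SameCycle i k → x i = x k}
      = ↑(F.filter fun x => ∀ i, x (τ i) = x i) := by
    intro τ
    ext x
    simp [hmemF x, hcond τ x]
  calc ∑ x ∈ F.filter (fun x => Function.Injective x), h x
      = ∑ x ∈ F, (if Function.Injective x then 1 else 0) * h x := by
        rw [Finset.sum_filter]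
        refine Finset.sum_congr rfl fun x _ => ?_
        split <;> simp
    _ = ∑ x ∈ F, (∑ τ : Equiv.Perm (Fin j),
          if (∀ i, x (τ i) = x i) then ((Equiv.Perm.sign τ : ℤ) : ℂ) else 0) * h x := by
        refine Finset.sum_congr rfl fun x _ => ?_
        rw [hkey x]
    _ = ∑ τ : Equiv.Perm (Fin j), ∑ x ∈ F,
          (if (∀ i, x (τ i) = x i) then ((Equiv.Perm.sign τ : ℤ) : ℂ) else 0) * h x := by
        rw [Finset.sum_comm]
        refine Finset.sum_congr rfl fun x _ => ?_
        rw [Finset.sum_mul]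
    _ = ∑ τ : Equiv.Perm (Fin j), (-1 : ℂ) ^ (j - numCycles τ) *
          ∑ᶠ x ∈ {x : Fin j → α | (∀ i, x i ∈ D) ∧
            ∀ i k : Fin j, τ.SameCycle i k → x i = x k}, h x := by
        refine Finset.sum_congr rfl fun τ _ => ?_
        rw [hR τ, finsum_mem_coe_finset, pow_eq_sign, Finset.mul_sum, Finset.sum_filter]
        refine Finset.sum_congr rfl fun x _ => ?_
        split <;> simp
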